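/- Let F_q be a finite field, s a positive integer, and γ ∈ F_q with γ(γ-1)(γ+s-1)(γ+s-2) ≠ 0. Define F0 = x^{s-1}+⋯+x+γ and F1 = (x^{s-1}+⋯+x-(γ+s-2)) / (-(γ-1)(γ+s-1)) in F_q[x]/(x^s-1). Then F0·F1 = 1 in F_q[x]/(x^s-1). -/

import Mathlib

set_option maxHeartbeats 1000000


open Polynomial

/-- In `F_q[x]/(x^s-1)`, with `F0 = x^{s-1}+⋯+x+γ` and
`F1 = (x^{s-1}+⋯+x-(γ+s-2)) / (-(γ-1)(γ+s-1))`, one has `F0 · F1 = 1`. -/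
theorem stmt0 {F : Type*} [Field F] [Fintype F] (s : ℕ) (hs : 0 < s) (γ : F)
    (hγ : γ * (γ - 1) * (γ + (s : F) - 1) * (γ + (s : F) - 2) ≠ 0) :
    Ideal.Quotient.mk (Ideal.span {(X : F[X]) ^ s - 1})
        ((C γ + ∑ i ∈ Finset.Ico 1 s, X ^ i) *
          (C (-((γ - 1) * (γ + (s : F) - 1)))⁻¹ *
            (C (-(γ + (s : F) - 2)) + ∑ i ∈ Finset.Ico 1 s, X ^ i))) = 1 := by
  set φ := Ideal.Quotient.mk (Ideal.span {(X : F[X]) ^ s - 1}) with hφ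
  set x := φ X with hxdef
  set g := ∑ i ∈ Finset.range s, x ^ i with hgdef
  have hzero : g * (x - 1) = 0 := by
    rw [hgdef, hxdef, geom_sum_mul]
    have : φ ((X : F[X]) ^ s - 1) = 0 :=
      Ideal.Quotient.eq_zero_iff_mem.2 (Ideal.subset_span rfl)
    simpa using this
  have hgx : g * x = g := by linear_combination hzero
  have hgxi : ∀ i : ℕ, g * x ^ i = g := by
    intro i
    induction i with
    | zero => simp
    | succ n ih => rw [pow_succ, ← mul_assoc, ih, hgx]
  have hgg : g * g = (s : F[X] ⧸ Ideal.span {(X : F[X]) ^ s - 1}) * g := by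
    calc g * g = ∑ i ∈ Finset.range s, g * x ^ i := by rw [hgdef, Finset.mul_sum]
    _ = ∑ _i ∈ Finset.range s, g := by simp [hgxi]
    _ = (s : F[X] ⧸ Ideal.span {(X : F[X]) ^ s - 1}) * g := by
        simp [Finset.sum_const, nsmul_eq_mul]
  have hsum : φ (∑ i ∈ Finset.Ico 1 s, X ^ i) = g - 1 := by
    have h := Finset.sum_eq_sum_Ico_succ_bot hs (fun i => x ^ i)
    rw [hgdef, Finset.range_eq_Ico, h]
    simp [map_sum]
    rfl
  set c : F := -((γ - 1) * (γ + (s : F) - 1)) with hc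
  have hcne : c ≠ 0 := by
    intro h
    apply hγ
    have h1 : (γ - 1) * (γ + (s : F) - 1) = 0 := neg_eq_zero.mp h
    rcases mul_eq_zero.mp h1 with h2 | h2 <;> rw [h2] <;> ring
  set ι : F →+* F[X] ⧸ Ideal.span {(X : F[X]) ^ s - 1} := φ.comp (C : F →+* F[X]) with hι
  have hιa : ∀ r : F, ι r = φ (C r) := fun r => rfl
  set a := ι γ with ha
  have hCc : φ (C c) = -((a - 1) * (a + (s : F[X] ⧸ Ideal.span {(X : F[X]) ^ s - 1}) - 1)) := by
    rw [← hιa, hc, ha]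
    simp only [map_neg, map_mul, map_sub, map_add, map_one, map_natCast]
  have hinv : φ (C c⁻¹) * (-((a - 1) * (a + (s : F[X] ⧸ Ideal.span {(X : F[X]) ^ s - 1}) - 1))) = 1 := by
    rw [← hCc, ← map_mul, ← map_mul, inv_mul_cancel₀ hcne, map_one, map_one]
  have hCd : φ (C (-(γ + (s : F) - 2))) = -(a + (s : F[X] ⧸ Ideal.span {(X : F[X]) ^ s - 1}) - 2) := by
    rw [← hιa, ha]
    simp only [map_neg, map_sub, map_add, map_natCast, map_ofNat]
  rw [map_mul, map_mul, map_add, map_add, hsum, hCd, ← hιa, ← ha]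
  linear_combination (φ (C c⁻¹)) * hgg + hinv
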